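/- Let G be a locally compact group acting on spaces X₀, …, Xₙ by actions T, let φᵢ : X_{i−1} × Ξᵢ → Xᵢ be feature maps with G-convolutional versions φ^τᵢ(x, ξ)(g) := T_g[φᵢ(T_{g⁻¹}[x], ξ)], and define the depth-n G-convolutional feature map φ^τ_{1:n}(x, ξ_{1:n})(g) := φ^τₙ(·, ξₙ)(g) ∘ ⋯ ∘ φ^τ₁(x, ξ₁)(g) and the depth-n machine GCN[γ](x)(g) := ∫_{Ξ_{1:n}} γ(ξ_{1:n}) φ^τ_{1:n}(x, ξ_{1:n})(g) dξ_{1:n}. Let DNN[γ](x) := ∫_{Ξ_{1:n}} γ(ξ_{1:n}) φ_{1:n}(x, ξ_{1:n}) dξ_{1:n} be the corresponding (non-convolutional) deep machine with φ_{1:n}(x,ξ_{1:n}) := φₙ(·,ξₙ) ∘ ⋯ ∘ φ₁(x,ξ₁). Then for every g ∈ G, x ∈ X₀, and γ for which the integrals are defined, GCN[γ](x)(g) = τ_g[DNN[γ]](x), where τ_g[f](x) := T_g[f(T_{g⁻¹}[x])]. -/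

import Mathlib

open MeasureTheory

theorem statement17
    {G : Type*} [Group G] [TopologicalSpace G] [IsTopologicalGroup G]
    [LocallyCompactSpace G]
    (n : ℕ) (Xs : ℕ → Type*) (Ξs : ℕ → Type*)
    (T : ∀ i : ℕ, G → Xs i → Xs i)
    (hT1 : ∀ (i : ℕ) (x : Xs i), T i 1 x = x)
    (hTmul : ∀ (i : ℕ) (g h : G) (x : Xs i), T i (g * h) x = T i g (T i h x))
    [NormedAddCommGroup (Xs n)] [NormedSpace ℝ (Xs n)] [CompleteSpace (Xs n)]
    (hTlin : ∀ g : G, IsBoundedLinearMap ℝ (T n g))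
    (φ : ∀ i : ℕ, Xs i → Ξs i → Xs (i + 1))
    (Φ : ∀ k : ℕ, Xs 0 → (∀ i : Fin n, Ξs i) → Xs k)
    (hΦ0 : ∀ x ξ, Φ 0 x ξ = x)
    (hΦs : ∀ (k : ℕ) (hk : k < n) x ξ, Φ (k + 1) x ξ = φ k (Φ k x ξ) (ξ ⟨k, hk⟩))
    (Φτ : ∀ k : ℕ, Xs 0 → (∀ i : Fin n, Ξs i) → G → Xs k)
    (hΦτ0 : ∀ x ξ g, Φτ 0 x ξ g = x)
    (hΦτs : ∀ (k : ℕ) (hk : k < n) x ξ g,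
      Φτ (k + 1) x ξ g = T (k + 1) g (φ k (T k g⁻¹ (Φτ k x ξ g)) (ξ ⟨k, hk⟩)))
    [MeasurableSpace (∀ i : Fin n, Ξs i)] (μP : Measure (∀ i : Fin n, Ξs i))
    (γ : (∀ i : Fin n, Ξs i) → ℝ) (g : G) (x : Xs 0)
    (hint : Integrable (fun ξ => γ ξ • Φτ n x ξ g) μP) :
    ∫ ξ, γ ξ • Φτ n x ξ g ∂μP = T n g (∫ ξ, γ ξ • Φ n (T 0 g⁻¹ x) ξ ∂μP) := by
  -- key: Φτ k x ξ g = T k g (Φ k (T 0 g⁻¹ x) ξ) for k ≤ n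
  have key : ∀ k : ℕ, k ≤ n → ∀ ξ, Φτ k x ξ g = T k g (Φ k (T 0 g⁻¹ x) ξ) := by
    intro k
    induction k with
    | zero =>
      intro _ ξ
      rw [hΦτ0, hΦ0, ← hTmul, mul_inv_cancel, hT1]
    | succ k ih =>
      intro hk ξ
      have hk' : k < n := hk
      rw [hΦτs k hk', ih (le_of_lt hk') ξ, ← hTmul, inv_mul_cancel, hT1,
        hΦs k hk']
  have hinv : ∀ y : Xs n, T n g⁻¹ (T n g y) = y := fun y => by
    rw [← hTmul, inv_mul_cancel, hT1]
  have hinv' : ∀ y : Xs n, T n g (T n g⁻¹ y) = y := fun y => by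
    rw [← hTmul, mul_inv_cancel, hT1]
  set L : Xs n →L[ℝ] Xs n := (hTlin g).toContinuousLinearMap with hL
  set L' : Xs n →L[ℝ] Xs n := (hTlin g⁻¹).toContinuousLinearMap with hL'
  have hLapp : ∀ y, L y = T n g y := fun _ => rfl
  have heq : (fun ξ => γ ξ • Φτ n x ξ g)
      = fun ξ => L (γ ξ • Φ n (T 0 g⁻¹ x) ξ) := by
    funext ξ
    rw [key n le_rfl ξ, ← hLapp, L.map_smul, hLapp]
  have hint2 : Integrable (fun ξ => γ ξ • Φ n (T 0 g⁻¹ x) ξ) μP := by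
    have : (fun ξ => γ ξ • Φ n (T 0 g⁻¹ x) ξ)
        = fun ξ => L' ((fun ξ => γ ξ • Φτ n x ξ g) ξ) := by
      funext ξ
      rw [heq]
      show _ = T n g⁻¹ (L _)
      rw [hLapp, hinv]
    rw [this]
    exact L'.integrable_comp hint
  calc ∫ ξ, γ ξ • Φτ n x ξ g ∂μP
      = ∫ ξ, L (γ ξ • Φ n (T 0 g⁻¹ x) ξ) ∂μP := by rw [heq]
    _ = L (∫ ξ, γ ξ • Φ n (T 0 g⁻¹ x) ξ ∂μP) := L.integral_comp_comm hint2
    _ = T n g _ := rfl
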